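/- Let A be a real m×m matrix with ⟨Ay, y⟩ ≥ λ_A ‖y‖² for all y ∈ ℝ^m (λ_A > 0), let g̃ : ℝ^n × ℝ^m → ℝ^m be Lipschitz continuous with constant L satisfying λ_A > L, let x ∈ ℝ^n, ε > 0, μ > 0, and let z : [0,T] → ℝ^m be continuous. If y : [0,T] → ℝ^m is continuously differentiable and satisfies y'(t) = (1/ε)(−A y(t) + g̃(x, y(t) + z(t))) for all t, then for all t ∈ [0,T]: (d/dt)‖y(t)‖² ≤ −((2(λ_A − L) − μ)/ε) ‖y(t)‖² + (1/(με)) (L(‖x‖ + ‖z(t)‖) + ‖g̃(0,0)‖)². -/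

import Mathlib

open scoped RealInnerProductSpace

theorem fast_eq_energy_estimate {n m : ℕ} (A : Matrix (Fin m) (Fin m) ℝ) (lamA L : ℝ)
    (hlam : 0 < lamA) (hLlam : L < lamA)
    (hA : ∀ y : EuclideanSpace ℝ (Fin m), lamA * ‖y‖ ^ 2 ≤ ⟪Matrix.toEuclideanLin A y, y⟫)
    (g : EuclideanSpace ℝ (Fin n) → EuclideanSpace ℝ (Fin m) → EuclideanSpace ℝ (Fin m))
    (hg : ∀ x₁ x₂ y₁ y₂, ‖g x₁ y₁ - g x₂ y₂‖ ≤ L * (‖x₁ - x₂‖ + ‖y₁ - y₂‖))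
    (x : EuclideanSpace ℝ (Fin n)) (ε μ : ℝ) (hε : 0 < ε) (hμ : 0 < μ)
    (T : ℝ) (hT : 0 < T)
    (z : ℝ → EuclideanSpace ℝ (Fin m)) (hz : ContinuousOn z (Set.Icc 0 T))
    (y : ℝ → EuclideanSpace ℝ (Fin m))
    (hy : ∀ t ∈ Set.Icc (0 : ℝ) T,
      HasDerivAt y (ε⁻¹ • (-(Matrix.toEuclideanLin A (y t)) + g x (y t + z t))) t) :
    ∀ t ∈ Set.Icc (0 : ℝ) T,
      deriv (fun s => ‖y s‖ ^ 2) t ≤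
        -((2 * (lamA - L) - μ) / ε) * ‖y t‖ ^ 2
          + (1 / (μ * ε)) * (L * (‖x‖ + ‖z t‖) + ‖g 0 0‖) ^ 2 := by
  intro t ht
  set v := ε⁻¹ • (-(Matrix.toEuclideanLin A (y t)) + g x (y t + z t)) with hv
  have hyd := hy t ht
  have hd : HasDerivAt (fun s => ‖y s‖ ^ 2) (⟪y t, v⟫ + ⟪v, y t⟫) t := by
    have h := hyd.inner ℝ hyd
    have hfun : (fun s => ‖y s‖ ^ 2) = fun s => ⟪y s, y s⟫ :=
      funext fun s => (real_inner_self_eq_norm_sq _).symm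
    rw [hfun]
    exact h
  have hderiv : deriv (fun s => ‖y s‖ ^ 2) t = 2 * ⟪v, y t⟫ := by
    rw [hd.deriv, real_inner_comm (y t) v]; ring
  rw [hderiv]
  set r := ‖y t‖ with hr
  set B := L * (‖x‖ + ‖z t‖) + ‖g 0 0‖ with hB
  have hrnn : 0 ≤ r := norm_nonneg _
  have ha : lamA * r ^ 2 ≤ ⟪Matrix.toEuclideanLin A (y t), y t⟫ := hA (y t)
  have hc : ⟪g x (y t + z t), y t⟫ ≤ (L * r + B) * r := by
    rcases le_or_gt 0 L with hL | hL
    · have h1 : ⟪g x (y t + z t), y t⟫ ≤ ‖g x (y t + z t)‖ * r :=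
        real_inner_le_norm _ _
      have h2 : ‖g x (y t + z t)‖ ≤ L * (‖x‖ + ‖y t + z t‖) + ‖g 0 0‖ := by
        calc ‖g x (y t + z t)‖ = ‖g x (y t + z t) - g 0 0 + g 0 0‖ := by simp
          _ ≤ ‖g x (y t + z t) - g 0 0‖ + ‖g 0 0‖ := norm_add_le _ _
          _ ≤ L * (‖x - 0‖ + ‖y t + z t - 0‖) + ‖g 0 0‖ := by
              gcongr; exact hg x 0 (y t + z t) 0
          _ = L * (‖x‖ + ‖y t + z t‖) + ‖g 0 0‖ := by simp
      have h3 : ‖y t + z t‖ ≤ r + ‖z t‖ := norm_add_le _ _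
      calc ⟪g x (y t + z t), y t⟫ ≤ ‖g x (y t + z t)‖ * r := h1
        _ ≤ (L * (‖x‖ + (r + ‖z t‖)) + ‖g 0 0‖) * r := by
            apply mul_le_mul_of_nonneg_right _ hrnn
            refine h2.trans ?_
            gcongr
        _ = (L * r + B) * r := by rw [hB]; ring
    · have h4 := hg 0 0 (y t) 0
      simp only [sub_zero, sub_self, norm_zero, add_zero, zero_add] at h4
      have hy0 : y t = 0 := by
        have hn : ‖y t‖ = 0 := le_antisymm (by nlinarith [norm_nonneg (g 0 (y t) - g 0 0)]) (norm_nonneg _)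
        exact norm_eq_zero.mp hn
      have hr0 : r = 0 := by rw [hr, hy0, norm_zero]
      rw [hy0, inner_zero_right, hr0]
      ring_nf
      exact le_refl 0
  have hinner : ⟪v, y t⟫ = ε⁻¹ * (-⟪Matrix.toEuclideanLin A (y t), y t⟫
      + ⟪g x (y t + z t), y t⟫) := by
    rw [hv, real_inner_smul_left, inner_add_left, inner_neg_left]
  rw [hinner]
  set a := ⟪Matrix.toEuclideanLin A (y t), y t⟫
  set c := ⟪g x (y t + z t), y t⟫
  rw [div_eq_mul_inv, one_div, mul_inv, ← mul_le_mul_iff_right₀ (mul_pos hμ hε)]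
  have hε' : ε * ε⁻¹ = 1 := mul_inv_cancel₀ hε.ne'
  have hμ' : μ * μ⁻¹ = 1 := mul_inv_cancel₀ hμ.ne'
  have key : μ * (2 * (-a + c)) ≤ μ * (-(2 * (lamA - L) - μ) * r ^ 2) + B ^ 2 := by
    nlinarith [sq_nonneg (μ * r - B), mul_pos hμ hε]
  calc μ * ε * (2 * (ε⁻¹ * (-a + c))) = ε * ε⁻¹ * (μ * (2 * (-a + c))) := by ring
    _ = μ * (2 * (-a + c)) := by rw [hε']; ring
    _ ≤ μ * (-(2 * (lamA - L) - μ) * r ^ 2) + B ^ 2 := key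
    _ = μ * ε * (-((2 * (lamA - L) - μ) * ε⁻¹) * r ^ 2 + μ⁻¹ * ε⁻¹ * B ^ 2) := by
        field_simp
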